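/- In the steady state of the self-regulating gene model, for every s ∈ ℕ: E[N^{s+1}] = (λ/μ) E[N^s 1_{A=1}] + ((μ+λ̃)/μ) E[N^s 1_{A=0}] − ∑_{j=1}^s C(s,j)(−1)^j (E[N^{s−j+1}] − E[N^{s−j} 1_{A=0}]). -/

import Mathlib

private lemma spoly (g : ℕ → ℝ) (h : ∀ k : ℕ, Summable fun n : ℕ => (n : ℝ) ^ k * g n)
    (p : Polynomial ℝ) : Summable fun n : ℕ => p.eval (n : ℝ) * g n := by
  refine (summable_sum (s := Finset.range (p.natDegree + 1))
      (f := fun i (n : ℕ) => p.coeff i * ((n : ℝ) ^ i * g n))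
      (fun i _ => (h i).mul_left _)).congr fun n => ?_
  rw [Polynomial.eval_eq_sum_range, Finset.sum_mul]
  exact Finset.sum_congr rfl fun i _ => by ring

private lemma spoly' (g : ℕ → ℝ) (h : ∀ k : ℕ, Summable fun n : ℕ => (n : ℝ) ^ k * g n)
    (a b : ℕ) : Summable fun n : ℕ => ((n : ℝ) - 1) ^ a * (n : ℝ) ^ b * g n := by
  refine (spoly g h ((Polynomial.X - 1) ^ a * Polynomial.X ^ b)).congr fun n => ?_
  simp [Polynomial.eval_mul, Polynomial.eval_pow]

/-- Moment recursion for the total protein number: for every `s`,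
`E[N^{s+1}] = (λ/μ) E[N^s 1_{A=1}] + ((μ+λ̃)/μ) E[N^s 1_{A=0}]
  − ∑_{j=1}^s C(s,j)(−1)^j (E[N^{s−j+1}] − E[N^{s−j} 1_{A=0}])`. -/
theorem stmt13 (lam lamt μ θ ψ : ℝ) (hlam : 0 < lam) (hμ : 0 < μ) (hθ : 0 < θ)
    (hψ : 0 < ψ) (hlamt : 0 ≤ lamt)
    (π1 π0 : ℕ → ℝ)
    (hnonneg : ∀ n, 0 ≤ π1 n ∧ 0 ≤ π0 n)
    (h00 : π0 0 = 0)
    (htotal : (∑' n, π1 n) + (∑' n, π0 n) = 1)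
    (hmom1 : ∀ k : ℕ, Summable (fun n : ℕ => (n : ℝ) ^ k * π1 n))
    (hmom0 : ∀ k : ℕ, Summable (fun n : ℕ => (n : ℝ) ^ k * π0 n))
    (hboundary : π1 0 * lam = π1 1 * μ + π0 0 * θ)
    (hmaster1 : ∀ n : ℕ, 1 ≤ n →
        π1 n * (n * (ψ + μ) + lam)
          = π1 (n - 1) * lam + π1 (n + 1) * (n + 1) * μ + π0 n * θ)
    (hmaster0 : ∀ n : ℕ, 1 ≤ n →
        π0 n * (((n : ℝ) - 1) * μ + θ + lamt)
          = π0 (n - 1) * lamt + π0 (n + 1) * n * μ + π1 n * ψ * n)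
    (s : ℕ) :
    ∑' n : ℕ, (n : ℝ) ^ (s + 1) * (π1 n + π0 n)
      = (lam / μ) * (∑' n : ℕ, (n : ℝ) ^ s * π1 n)
        + ((μ + lamt) / μ) * (∑' n : ℕ, (n : ℝ) ^ s * π0 n)
        - ∑ j ∈ Finset.Icc 1 s,
            (s.choose j : ℝ) * (-1) ^ j
              * ((∑' n : ℕ, (n : ℝ) ^ (s - j + 1) * (π1 n + π0 n))
                  - ∑' n : ℕ, (n : ℝ) ^ (s - j) * π0 n) := by
  have hμ' : μ ≠ 0 := ne_of_gt hμ
  -- summability of the auxiliary sequences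
  have S1' : Summable fun n : ℕ => ((n : ℝ) - 1) ^ s * (n : ℝ) * π1 n :=
    (spoly' π1 hmom1 s 1).congr fun n => by rw [pow_one]
  have S0a : Summable fun n : ℕ => ((n : ℝ) - 1) ^ s * ((n : ℝ) - 1) * π0 n :=
    (spoly' π0 hmom0 (s + 1) 0).congr fun n => by rw [pow_succ, pow_zero]; ring
  -- flux balance across the cut between n and n+1
  have flux : ∀ n : ℕ, lam * π1 n + lamt * π0 n
      = μ * ((n : ℝ) + 1) * π1 (n + 1) + μ * (n : ℝ) * π0 (n + 1) := by
    intro n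
    induction n with
    | zero =>
      rw [h00] at hboundary
      push_cast
      rw [h00]
      linarith [hboundary]
    | succ n ih =>
      have h1 := hmaster1 (n + 1) (by omega)
      have h0 := hmaster0 (n + 1) (by omega)
      simp only [Nat.add_sub_cancel] at h1 h0
      push_cast at h1 h0 ⊢
      linarith [h1, h0, ih]
  -- the key moment identity coming from the flux balance
  have KEY : μ * (∑' n : ℕ, ((n : ℝ) - 1) ^ s * (n : ℝ) * π1 n)
      + μ * (∑' n : ℕ, ((n : ℝ) - 1) ^ s * ((n : ℝ) - 1) * π0 n)
      = lam * (∑' n : ℕ, (n : ℝ) ^ s * π1 n) + lamt * (∑' n : ℕ, (n : ℝ) ^ s * π0 n) := by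
    have hFa := S1'.mul_left μ
    have hFb := S0a.mul_left μ
    have hF := hFa.add hFb
    have e1 : ∑' n : ℕ, (μ * (((n : ℝ) - 1) ^ s * (n : ℝ) * π1 n)
        + μ * (((n : ℝ) - 1) ^ s * ((n : ℝ) - 1) * π0 n))
        = μ * (∑' n : ℕ, ((n : ℝ) - 1) ^ s * (n : ℝ) * π1 n)
          + μ * (∑' n : ℕ, ((n : ℝ) - 1) ^ s * ((n : ℝ) - 1) * π0 n) := by
      rw [Summable.tsum_add hFa hFb, tsum_mul_left, tsum_mul_left]
    have e2 := Summable.tsum_eq_zero_add hF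
    have e3 : ∀ n : ℕ, μ * ((((n + 1 : ℕ) : ℝ) - 1) ^ s * ((n + 1 : ℕ) : ℝ) * π1 (n + 1))
        + μ * ((((n + 1 : ℕ) : ℝ) - 1) ^ s * (((n + 1 : ℕ) : ℝ) - 1) * π0 (n + 1))
        = lam * ((n : ℝ) ^ s * π1 n) + lamt * ((n : ℝ) ^ s * π0 n) := by
      intro n
      have hfl := flux n
      push_cast
      linear_combination (-((n : ℝ) ^ s)) * hfl
    have e4 : (∑' n : ℕ, (μ * ((((n + 1 : ℕ) : ℝ) - 1) ^ s * ((n + 1 : ℕ) : ℝ) * π1 (n + 1))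
        + μ * ((((n + 1 : ℕ) : ℝ) - 1) ^ s * (((n + 1 : ℕ) : ℝ) - 1) * π0 (n + 1))))
        = lam * (∑' n : ℕ, (n : ℝ) ^ s * π1 n) + lamt * (∑' n : ℕ, (n : ℝ) ^ s * π0 n) := by
      rw [tsum_congr e3, Summable.tsum_add ((hmom1 s).mul_left lam) ((hmom0 s).mul_left lamt),
        tsum_mul_left, tsum_mul_left]
    rw [← e1, e2]
    simp only [Nat.cast_zero, h00, mul_zero, zero_mul, add_zero, zero_add]
    exact e4
  -- binomial expansion
  have hbin : ∀ x : ℝ, (∑ j ∈ Finset.Icc 1 s, (s.choose j : ℝ) * (-1) ^ j * x ^ (s - j))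
      = (x - 1) ^ s - x ^ s := by
    intro x
    have hset : Finset.range (s + 1) = insert 0 (Finset.Icc 1 s) := by
      ext m
      simp only [Finset.mem_range, Finset.mem_insert, Finset.mem_Icc]
      omega
    have h := add_pow (-1 : ℝ) x s
    rw [hset, Finset.sum_insert (by simp)] at h
    have h2 : (x - 1) ^ s = (-1 + x) ^ s := by ring_nf
    rw [h2, h]
    simp only [pow_zero, Nat.sub_zero, one_mul, Nat.choose_zero_right, Nat.cast_one, mul_one]
    rw [add_sub_cancel_left]
    exact Finset.sum_congr rfl fun j _ => by ring
  -- rewrite the finite sum of tsums as a single tsum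
  have hS : (∑ j ∈ Finset.Icc 1 s,
        (s.choose j : ℝ) * (-1) ^ j
          * ((∑' n : ℕ, (n : ℝ) ^ (s - j + 1) * (π1 n + π0 n))
              - ∑' n : ℕ, (n : ℝ) ^ (s - j) * π0 n))
      = ∑' n : ℕ, (((n : ℝ) - 1) ^ s - (n : ℝ) ^ s) * ((n : ℝ) * (π1 n + π0 n) - π0 n) := by
    have ha : ∀ j : ℕ, Summable fun n : ℕ => (n : ℝ) ^ (s - j + 1) * (π1 n + π0 n) := by
      intro j
      exact ((hmom1 (s - j + 1)).add (hmom0 (s - j + 1))).congr fun n => by ring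
    have hstep : ∀ j ∈ Finset.Icc 1 s,
        (s.choose j : ℝ) * (-1) ^ j
          * ((∑' n : ℕ, (n : ℝ) ^ (s - j + 1) * (π1 n + π0 n))
              - ∑' n : ℕ, (n : ℝ) ^ (s - j) * π0 n)
        = ∑' n : ℕ, (s.choose j : ℝ) * (-1) ^ j
            * ((n : ℝ) ^ (s - j + 1) * (π1 n + π0 n) - (n : ℝ) ^ (s - j) * π0 n) := by
      intro j _
      rw [tsum_mul_left, Summable.tsum_sub (ha j) (hmom0 (s - j))]
    rw [Finset.sum_congr rfl hstep,
      ← Summable.tsum_finsetSum (fun j _ => (((ha j).sub (hmom0 (s - j))).mul_left _))]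
    refine tsum_congr fun n => ?_
    rw [← hbin (n : ℝ), Finset.sum_mul]
    refine Finset.sum_congr rfl fun j _ => ?_
    rw [pow_succ]
    ring
  -- split the combined tsum into individual moments
  have hB : (∑' n : ℕ, (((n : ℝ) - 1) ^ s - (n : ℝ) ^ s) * ((n : ℝ) * (π1 n + π0 n) - π0 n))
      = (∑' n : ℕ, ((n : ℝ) - 1) ^ s * (n : ℝ) * π1 n)
        + (∑' n : ℕ, ((n : ℝ) - 1) ^ s * ((n : ℝ) - 1) * π0 n)
        - (∑' n : ℕ, (n : ℝ) ^ (s + 1) * π1 n)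
        - (∑' n : ℕ, (n : ℝ) ^ (s + 1) * π0 n)
        + (∑' n : ℕ, (n : ℝ) ^ s * π0 n) := by
    have hpt : ∀ n : ℕ, (((n : ℝ) - 1) ^ s - (n : ℝ) ^ s) * ((n : ℝ) * (π1 n + π0 n) - π0 n)
        = ((n : ℝ) - 1) ^ s * (n : ℝ) * π1 n + ((n : ℝ) - 1) ^ s * ((n : ℝ) - 1) * π0 n
          - (n : ℝ) ^ (s + 1) * π1 n - (n : ℝ) ^ (s + 1) * π0 n + (n : ℝ) ^ s * π0 n := by
      intro n; ring
    rw [tsum_congr hpt,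
      Summable.tsum_add (((S1'.add S0a).sub (hmom1 (s + 1))).sub (hmom0 (s + 1))) (hmom0 s),
      Summable.tsum_sub ((S1'.add S0a).sub (hmom1 (s + 1))) (hmom0 (s + 1)),
      Summable.tsum_sub (S1'.add S0a) (hmom1 (s + 1)), Summable.tsum_add S1' S0a]
  have hT : (∑' n : ℕ, (n : ℝ) ^ (s + 1) * (π1 n + π0 n))
      = (∑' n : ℕ, (n : ℝ) ^ (s + 1) * π1 n) + (∑' n : ℕ, (n : ℝ) ^ (s + 1) * π0 n) := by
    rw [tsum_congr (fun n : ℕ => mul_add ((n : ℝ) ^ (s + 1)) (π1 n) (π0 n)),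
      Summable.tsum_add (hmom1 (s + 1)) (hmom0 (s + 1))]
  rw [hT, hS, hB]
  field_simp at KEY ⊢
  linear_combination KEY
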